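/- Suppose nonnegative random variables ε_k adapted to a filtration satisfy γ E[ε_{k+1} | F_k] ≤ ε_k − g_k almost surely for all k, where γ ∈ (0,1) and g_k ≥ 0 is F_k-measurable. Then for every k, Σ_{i=0}^∞ γ^i E[g_{k+i} | F_k] ≤ ε_k almost surely. -/

import Mathlib

open MeasureTheory Filter

/-- Discounted drift condition implies a discounted sum bound: if nonnegative adapted
`ε_k`, `g_k` satisfy `γ E[ε_{k+1} | F_k] ≤ ε_k - g_k` a.s. with `γ ∈ (0,1)`, then for
every `k`, `∑_{i=0}^∞ γ^i E[g_{k+i} | F_k] ≤ ε_k` almost surely. -/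
theorem stmt9 {Ω : Type*} {m0 : MeasurableSpace Ω} (μ : Measure Ω)
    [IsProbabilityMeasure μ] (ℱ : Filtration ℕ m0)
    (γ : ℝ) (hγ : γ ∈ Set.Ioo (0 : ℝ) 1)
    (ε g : ℕ → Ω → ℝ)
    (hεpos : ∀ k ω, 0 ≤ ε k ω) (hgpos : ∀ k ω, 0 ≤ g k ω)
    (hεadp : Adapted ℱ ε) (hgadp : Adapted ℱ g)
    (hεint : ∀ k, Integrable (ε k) μ) (hgint : ∀ k, Integrable (g k) μ)
    (hdrift : ∀ k, ∀ᵐ ω ∂μ, γ * (μ[ε (k + 1)|ℱ k]) ω ≤ ε k ω - g k ω) :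
    ∀ k, ∀ᵐ ω ∂μ, (∑' i : ℕ, γ ^ i * (μ[g (k + i)|ℱ k]) ω) ≤ ε k ω := by
  intro k
  have hγ0 : (0:ℝ) ≤ γ := le_of_lt hγ.1
  -- step: conditional drift pulled down to ℱ k
  have step : ∀ n : ℕ, ∀ᵐ ω ∂μ,
      γ * (μ[ε (k + n + 1)|ℱ k]) ω ≤ (μ[ε (k + n)|ℱ k]) ω - (μ[g (k + n)|ℱ k]) ω := by
    intro n
    have h1 : (fun ω => γ * (μ[ε (k + n + 1)|ℱ (k + n)]) ω) ≤ᵐ[μ]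
        fun ω => ε (k + n) ω - g (k + n) ω := hdrift (k + n)
    have hmono := condExp_mono (m := ℱ k) (μ := μ)
      ((integrable_condExp (f := ε (k + n + 1)) (m := ℱ (k + n))).const_mul γ)
      ((hεint (k + n)).sub (hgint (k + n))) h1
    have h2 : μ[(fun ω => γ * (μ[ε (k + n + 1)|ℱ (k + n)]) ω)|ℱ k]
        =ᵐ[μ] fun ω => γ * (μ[ε (k + n + 1)|ℱ k]) ω := by
      have hs : (fun ω => γ * (μ[ε (k + n + 1)|ℱ (k + n)]) ω)
          = γ • (μ[ε (k + n + 1)|ℱ (k + n)]) := rfl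
      rw [hs]
      calc μ[γ • (μ[ε (k + n + 1)|ℱ (k + n)])|ℱ k]
          =ᵐ[μ] γ • μ[(μ[ε (k + n + 1)|ℱ (k + n)])|ℱ k] := condExp_smul γ _ _
        _ =ᵐ[μ] γ • μ[ε (k + n + 1)|ℱ k] := by
            filter_upwards [condExp_condExp_of_le (ℱ.mono (Nat.le_add_right k n))
              (ℱ.le (k + n)) (f := ε (k + n + 1)) (μ := μ)] with ω hω
            simp [hω]
        _ = fun ω => γ * (μ[ε (k + n + 1)|ℱ k]) ω := rfl
    have h3 : μ[(fun ω => ε (k + n) ω - g (k + n) ω)|ℱ k]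
        =ᵐ[μ] fun ω => (μ[ε (k + n)|ℱ k]) ω - (μ[g (k + n)|ℱ k]) ω :=
      condExp_sub (hεint (k + n)) (hgint (k + n)) _
    filter_upwards [hmono, h2, h3] with ω hω h2ω h3ω
    rw [← h2ω, ← h3ω]; exact hω
  -- partial sums bound with remainder
  have key : ∀ n : ℕ, ∀ᵐ ω ∂μ,
      (∑ i ∈ Finset.range n, γ ^ i * (μ[g (k + i)|ℱ k]) ω)
        + γ ^ n * (μ[ε (k + n)|ℱ k]) ω ≤ ε k ω := by
    intro n
    induction n with
    | zero =>
      have h := condExp_of_stronglyMeasurable (ℱ.le k) (hεadp k).stronglyMeasurable (hεint k)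
      simp [h]
    | succ n ih =>
      filter_upwards [ih, step n] with ω ihω hsω
      rw [Finset.sum_range_succ]
      have : γ ^ (n + 1) * (μ[ε (k + n + 1)|ℱ k]) ω
          ≤ γ ^ n * (μ[ε (k + n)|ℱ k]) ω - γ ^ n * (μ[g (k + n)|ℱ k]) ω := by
        have := mul_le_mul_of_nonneg_left hsω (pow_nonneg hγ0 n)
        calc γ ^ (n + 1) * (μ[ε (k + n + 1)|ℱ k]) ω
            = γ ^ n * (γ * (μ[ε (k + n + 1)|ℱ k]) ω) := by ring
          _ ≤ γ ^ n * ((μ[ε (k + n)|ℱ k]) ω - (μ[g (k + n)|ℱ k]) ω) := this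
          _ = γ ^ n * (μ[ε (k + n)|ℱ k]) ω - γ ^ n * (μ[g (k + n)|ℱ k]) ω := by ring
      have h5 : ε (k + (n + 1)) = ε (k + n + 1) := by ring_nf
      rw [h5]
      linarith
  have hnn : ∀ i : ℕ, ∀ᵐ ω ∂μ, 0 ≤ (μ[g (k + i)|ℱ k]) ω := fun i =>
    condExp_nonneg (Eventually.of_forall (hgpos (k + i)))
  have hεnn : ∀ n : ℕ, ∀ᵐ ω ∂μ, 0 ≤ (μ[ε (k + n)|ℱ k]) ω := fun n =>
    condExp_nonneg (Eventually.of_forall (hεpos (k + n)))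
  have hall : ∀ᵐ ω ∂μ, (∀ n, (∑ i ∈ Finset.range n, γ ^ i * (μ[g (k + i)|ℱ k]) ω)
      + γ ^ n * (μ[ε (k + n)|ℱ k]) ω ≤ ε k ω) ∧ (∀ i, 0 ≤ (μ[g (k + i)|ℱ k]) ω)
      ∧ (∀ n, 0 ≤ (μ[ε (k + n)|ℱ k]) ω) := by
    refine ((ae_all_iff.2 key).and ((ae_all_iff.2 hnn).and (ae_all_iff.2 hεnn))).mono ?_
    exact fun ω h => ⟨h.1, h.2.1, h.2.2⟩
  filter_upwards [hall] with ω ⟨h1, h2, h3⟩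
  refine Real.tsum_le_of_sum_range_le (fun i => mul_nonneg (pow_nonneg hγ0 i) (h2 i)) ?_
  intro n
  have := h1 n
  nlinarith [mul_nonneg (pow_nonneg hγ0 n) (h3 n)]
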